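/- Let u, u' be sequences of length m concatenated r times with phase rotations: U(γ + γ'·m) = u(γ)·ω_r^{cγ'}, U'(γ + γ'·m) = u(γ)·ω_r^{c'γ'}, for 0 ≤ γ < m, 0 ≤ γ' < r, with r prime and c ≠ c' in Z/r. Then the 1D aperiodic cross-correlation C(U, U')(τ) for 0 ≤ τ < m satisfies C(U,U')(τ) = C(u,u)(τ)·D + C(u,u)(τ − m)·D', where D = ∑_{σ=0}^{r−1} ω_r^{(c−c')σ} = 0 and D' = ∑_{σ=0}^{r−2} ω_r^{cσ − c'(σ+1)}; consequently if additionally C(u,u)(τ−m) = 0 for 0 < τ < m, then C(U,U')(τ) = 0 for all 0 ≤ τ < m. -/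

import Mathlib

open Complex Finset

/-- 1D aperiodic cross-correlation at an integer shift `τ`. -/
noncomputable def corr1 (l : ℕ) (a b : ℕ → ℂ) (τ : ℤ) : ℂ :=
  ∑ i ∈ Finset.range l,
    if 0 ≤ (i : ℤ) + τ ∧ (i : ℤ) + τ < l
    then a i * starRingEnd ℂ (b ((i : ℤ) + τ).toNat)
    else 0

theorem stmt11 (m r : ℕ) (hm : 0 < m) (hr : r.Prime)
    (u : ℕ → ℂ) (c c' : ℕ) (hc : c < r) (hc' : c' < r) (hcc' : c ≠ c') :
    let ω : ℂ := Complex.exp (2 * Real.pi * Complex.I / r)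
    let U : ℕ → ℂ := fun g => u (g % m) * ω ^ ((c : ℤ) * (g / m))
    let U' : ℕ → ℂ := fun g => u (g % m) * ω ^ ((c' : ℤ) * (g / m))
    let D : ℂ := ∑ σ ∈ Finset.range r, ω ^ (((c : ℤ) - (c' : ℤ)) * σ)
    let D' : ℂ := ∑ σ ∈ Finset.range (r - 1), ω ^ ((c : ℤ) * σ - (c' : ℤ) * (σ + 1))
    (∀ τ : ℕ, τ < m →
      corr1 (r * m) U U' τ = corr1 m u u τ * D + corr1 m u u ((τ : ℤ) - m) * D') ∧
    D = 0 ∧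
    ((∀ τ : ℕ, 0 < τ → τ < m → corr1 m u u ((τ : ℤ) - m) = 0) →
      ∀ τ : ℕ, τ < m → corr1 (r * m) U U' τ = 0) := by
  intro ω U U' D D'
  have hrpos : 0 < r := hr.pos
  have hrC : (r : ℂ) ≠ 0 := by exact_mod_cast hrpos.ne'
  have hmZ : ((m : ℤ)) ≠ 0 := by exact_mod_cast hm.ne'
  have hω0 : ω ≠ 0 := Complex.exp_ne_zero _
  have hconj : starRingEnd ℂ ω = ω⁻¹ := by
    show starRingEnd ℂ (Complex.exp _) = _
    rw [← Complex.exp_conj, ← Complex.exp_neg]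
    congr 1
    simp only [map_div₀, map_mul, Complex.conj_I, map_ofNat, Complex.conj_ofReal,
      Complex.conj_natCast]
    ring
  have hωr : ω ^ (r : ℕ) = 1 := by
    show Complex.exp _ ^ (r : ℕ) = 1
    rw [← Complex.exp_nat_mul, mul_div_cancel₀ _ hrC, Complex.exp_two_pi_mul_I]
  -- the term computation
  have hterm : ∀ x y : ℕ, U x * starRingEnd ℂ (U' y)
      = u (x % m) * starRingEnd ℂ (u (y % m))
        * ω ^ ((c : ℤ) * ((x : ℤ) / (m : ℤ)) - (c' : ℤ) * ((y : ℤ) / (m : ℤ))) := by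
    intro x y
    show u (x % m) * ω ^ ((c : ℤ) * ((x : ℤ) / (m : ℤ)))
        * starRingEnd ℂ (u (y % m) * ω ^ ((c' : ℤ) * ((y : ℤ) / (m : ℤ)))) = _
    rw [map_mul, map_zpow₀, hconj, inv_zpow, ← zpow_neg, sub_eq_add_neg, zpow_add₀ hω0]
    ring
  -- D = 0
  have hζ : ω ^ ((c : ℤ) - (c' : ℤ)) ≠ 1 := by
    intro h
    have hexp : Complex.exp ((((c : ℤ) - (c' : ℤ) : ℤ) : ℂ)
        * (2 * Real.pi * Complex.I / r)) = 1 := by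
      rw [Complex.exp_int_mul]; exact h
    obtain ⟨n, hn⟩ := Complex.exp_eq_one_iff.1 hexp
    have h2 : (2 * Real.pi * Complex.I : ℂ) ≠ 0 := by
      simp [Real.pi_ne_zero, Complex.I_ne_zero]
    have h3 : (((c : ℤ) - (c' : ℤ) : ℤ) : ℂ) * (2 * Real.pi * Complex.I)
        = ((n * r : ℤ) : ℂ) * (2 * Real.pi * Complex.I) := by
      field_simp at hn
      push_cast at hn ⊢
      linear_combination (2 * Real.pi * Complex.I) * hn
    have h4 := mul_right_cancel₀ h2 h3
    have hint : (c : ℤ) - c' = n * r := by exact_mod_cast h4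
    rcases lt_trichotomy n 0 with hn0 | hn0 | hn0
    · have : n * r ≤ -r := by nlinarith
      omega
    · subst hn0; simp at hint; omega
    · have : (r : ℤ) ≤ n * r := by nlinarith
      omega
  have hD : D = 0 := by
    show (∑ σ ∈ Finset.range r, ω ^ (((c : ℤ) - (c' : ℤ)) * σ)) = 0
    have hco : ∀ σ ∈ Finset.range r,
        ω ^ (((c : ℤ) - (c' : ℤ)) * σ) = (ω ^ ((c : ℤ) - (c' : ℤ))) ^ σ := by
      intro σ _
      rw [zpow_mul, zpow_natCast]
    rw [Finset.sum_congr rfl hco, geom_sum_eq hζ]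
    have : (ω ^ ((c : ℤ) - (c' : ℤ))) ^ r = 1 := by
      rw [← zpow_natCast, ← zpow_mul, mul_comm, zpow_mul, zpow_natCast, hωr, one_zpow]
    rw [this, sub_self, zero_div]
  -- main identity
  have key : ∀ τ : ℕ, τ < m →
      corr1 (r * m) U U' τ = corr1 m u u τ * D + corr1 m u u ((τ : ℤ) - m) * D' := by
    intro τ hτ
    have hsplit : corr1 (r * m) U U' τ
        = ∑ γ ∈ Finset.range m, ∑ σ ∈ Finset.range r,
            (if 0 ≤ ((σ * m + γ : ℕ) : ℤ) + τ ∧ ((σ * m + γ : ℕ) : ℤ) + τ < ((r * m : ℕ) : ℤ)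
             then U (σ * m + γ) * starRingEnd ℂ (U' (((σ * m + γ : ℕ) : ℤ) + τ).toNat)
             else 0) := by
      rw [← Finset.sum_product']
      unfold corr1
      apply Finset.sum_nbij' (fun i => (i % m, i / m)) (fun p => p.2 * m + p.1)
      · intro a ha
        simp only [Finset.mem_range] at ha
        simp only [Finset.mem_product, Finset.mem_range]
        exact ⟨Nat.mod_lt _ hm, (Nat.div_lt_iff_lt_mul hm).2 (by omega)⟩
      · intro p hp
        simp only [Finset.mem_product, Finset.mem_range] at hp
        simp only [Finset.mem_range]
        calc p.2 * m + p.1 < p.2 * m + m := by omega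
          _ = (p.2 + 1) * m := by ring
          _ ≤ r * m := Nat.mul_le_mul_right m (by omega)
      · intro a _
        simp only
        rw [mul_comm]
        exact Nat.div_add_mod a m
      · intro p hp
        simp only [Finset.mem_product, Finset.mem_range] at hp
        have h1 : (p.2 * m + p.1) % m = p.1 := by
          rw [add_comm, Nat.add_mul_mod_self_right, Nat.mod_eq_of_lt hp.1]
        have h2 : (p.2 * m + p.1) / m = p.2 := by
          rw [add_comm, Nat.add_mul_div_right _ _ hm, Nat.div_eq_of_lt hp.1, zero_add]
        exact Prod.ext h1 h2
      · intro a _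
        have h : a / m * m + a % m = a := by rw [mul_comm]; exact Nat.div_add_mod a m
        simp only [h]
    rw [hsplit]
    show _ = corr1 m u u τ * D + corr1 m u u ((τ : ℤ) - m) * D'
    unfold corr1
    rw [Finset.sum_mul, Finset.sum_mul, ← Finset.sum_add_distrib]
    apply Finset.sum_congr rfl
    intro γ hγ
    simp only [Finset.mem_range] at hγ
    by_cases hcase : γ + τ < m
    · -- Case A : γ + τ < m
      have hA1 : (0 ≤ (γ : ℤ) + τ ∧ (γ : ℤ) + τ < (m : ℤ)) := by
        constructor <;> [positivity; exact_mod_cast hcase]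
      have hA2 : ¬ (0 ≤ (γ : ℤ) + ((τ : ℤ) - m) ∧ (γ : ℤ) + ((τ : ℤ) - m) < (m : ℤ)) := by
        push_neg
        intro h
        exfalso
        omega
      rw [if_pos hA1, if_neg hA2, zero_mul, add_zero]
      have htoA : (((γ : ℤ) + τ)).toNat = γ + τ := by omega
      rw [htoA]
      have hsummand : ∀ σ ∈ Finset.range r,
          (if 0 ≤ ((σ * m + γ : ℕ) : ℤ) + τ ∧ ((σ * m + γ : ℕ) : ℤ) + τ < ((r * m : ℕ) : ℤ)
           then U (σ * m + γ) * starRingEnd ℂ (U' (((σ * m + γ : ℕ) : ℤ) + τ).toNat)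
           else 0)
          = u γ * starRingEnd ℂ (u (γ + τ)) * ω ^ (((c : ℤ) - (c' : ℤ)) * σ) := by
        intro σ hσ
        simp only [Finset.mem_range] at hσ
        have hlt : σ * m + γ + τ < r * m := by
          calc σ * m + γ + τ < σ * m + m := by omega
            _ = (σ + 1) * m := by ring
            _ ≤ r * m := Nat.mul_le_mul_right m (by omega)
        have hcond : 0 ≤ ((σ * m + γ : ℕ) : ℤ) + τ
            ∧ ((σ * m + γ : ℕ) : ℤ) + τ < ((r * m : ℕ) : ℤ) := by
          refine ⟨by positivity, by exact_mod_cast hlt⟩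
        rw [if_pos hcond]
        have hto : (((σ * m + γ : ℕ) : ℤ) + τ).toNat = σ * m + (γ + τ) := by omega
        rw [hto, hterm]
        have e1 : (σ * m + γ) % m = γ := by
          rw [add_comm, Nat.add_mul_mod_self_right, Nat.mod_eq_of_lt hγ]
        have e2n : (σ * m + γ) / m = σ := by
          rw [add_comm, Nat.add_mul_div_right _ _ hm, Nat.div_eq_of_lt hγ, zero_add]
        have e2 : ((σ * m + γ : ℕ) : ℤ) / (m : ℤ) = (σ : ℤ) := by
          rw [← Int.natCast_ediv, e2n]
        have e3 : (σ * m + (γ + τ)) % m = γ + τ := by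
          rw [add_comm, Nat.add_mul_mod_self_right, Nat.mod_eq_of_lt hcase]
        have e4n : (σ * m + (γ + τ)) / m = σ := by
          rw [add_comm, Nat.add_mul_div_right _ _ hm, Nat.div_eq_of_lt hcase, zero_add]
        have e4 : ((σ * m + (γ + τ) : ℕ) : ℤ) / (m : ℤ) = (σ : ℤ) := by
          rw [← Int.natCast_ediv, e4n]
        rw [e1, e2, e3, e4]
        congr 1
        ring
      rw [Finset.sum_congr rfl hsummand, ← Finset.mul_sum]
    · -- Case B : m ≤ γ + τ
      push_neg at hcase
      have hB1 : ¬ (0 ≤ (γ : ℤ) + τ ∧ (γ : ℤ) + τ < (m : ℤ)) := by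
        push_neg
        intro _
        omega
      have hB2 : (0 ≤ (γ : ℤ) + ((τ : ℤ) - m) ∧ (γ : ℤ) + ((τ : ℤ) - m) < (m : ℤ)) := by omega
      rw [if_neg hB1, if_pos hB2, zero_mul, zero_add]
      have htoB : ((γ : ℤ) + ((τ : ℤ) - m)).toNat = γ + τ - m := by omega
      rw [htoB]
      obtain ⟨r', hr'⟩ : ∃ r', r = r' + 1 := ⟨r - 1, by omega⟩
      subst hr'
      rw [Finset.sum_range_succ]
      have hlast : ¬ (0 ≤ ((r' * m + γ : ℕ) : ℤ) + τ ∧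
          ((r' * m + γ : ℕ) : ℤ) + τ < (((r' + 1) * m : ℕ) : ℤ)) := by
        have hx : (r' + 1) * m = r' * m + m := by ring
        rw [hx]
        push_neg
        intro _
        push_cast
        omega
      rw [if_neg hlast, add_zero]
      have hsummand : ∀ σ ∈ Finset.range r',
          (if 0 ≤ ((σ * m + γ : ℕ) : ℤ) + τ
              ∧ ((σ * m + γ : ℕ) : ℤ) + τ < (((r' + 1) * m : ℕ) : ℤ)
           then U (σ * m + γ) * starRingEnd ℂ (U' (((σ * m + γ : ℕ) : ℤ) + τ).toNat)
           else 0)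
          = u γ * starRingEnd ℂ (u (γ + τ - m)) * ω ^ ((c : ℤ) * σ - (c' : ℤ) * (σ + 1)) := by
        intro σ hσ
        simp only [Finset.mem_range] at hσ
        have hlt : σ * m + γ + τ < (r' + 1) * m := by
          calc σ * m + γ + τ < σ * m + 2 * m := by omega
            _ = (σ + 2) * m := by ring
            _ ≤ (r' + 1) * m := Nat.mul_le_mul_right m (by omega)
        have hcond : 0 ≤ ((σ * m + γ : ℕ) : ℤ) + τ ∧
            ((σ * m + γ : ℕ) : ℤ) + τ < (((r' + 1) * m : ℕ) : ℤ) := by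
          refine ⟨by positivity, by exact_mod_cast hlt⟩
        rw [if_pos hcond]
        have hto : (((σ * m + γ : ℕ) : ℤ) + τ).toNat = (σ + 1) * m + (γ + τ - m) := by
          have hx : (σ + 1) * m = σ * m + m := by ring
          omega
        rw [hto, hterm]
        have hlt' : γ + τ - m < m := by omega
        have e1 : ((σ + 1) * m + (γ + τ - m)) % m = γ + τ - m := by
          rw [add_comm, Nat.add_mul_mod_self_right, Nat.mod_eq_of_lt hlt']
        have e2n : ((σ + 1) * m + (γ + τ - m)) / m = σ + 1 := by
          rw [add_comm, Nat.add_mul_div_right _ _ hm, Nat.div_eq_of_lt hlt', zero_add]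
        have e2 : (((σ + 1) * m + (γ + τ - m) : ℕ) : ℤ) / (m : ℤ) = ((σ : ℤ) + 1) := by
          rw [← Int.natCast_ediv, e2n]
          push_cast
          ring
        have e3 : (σ * m + γ) % m = γ := by
          rw [add_comm, Nat.add_mul_mod_self_right, Nat.mod_eq_of_lt hγ]
        have e4n : (σ * m + γ) / m = σ := by
          rw [add_comm, Nat.add_mul_div_right _ _ hm, Nat.div_eq_of_lt hγ, zero_add]
        have e4 : ((σ * m + γ : ℕ) : ℤ) / (m : ℤ) = (σ : ℤ) := by
          rw [← Int.natCast_ediv, e4n]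
        rw [e1, e2, e3, e4]
      rw [Finset.sum_congr rfl hsummand, ← Finset.mul_sum]
      rfl
  refine ⟨key, hD, ?_⟩
  intro h τ hτ
  rw [key τ hτ, hD, mul_zero, zero_add]
  rcases Nat.eq_zero_or_pos τ with h0 | h0
  · subst h0
    have hz : corr1 m u u (((0 : ℕ) : ℤ) - m) = 0 := by
      unfold corr1
      apply Finset.sum_eq_zero
      intro i hi
      simp only [Finset.mem_range] at hi
      rw [if_neg]
      push_cast
      omega
    rw [hz, zero_mul]
  · rw [h τ h0 hτ, zero_mul]
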